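/- Let X be a locally compact, Hausdorff, connected space, let ρ be a quasi-linear functional on C₀(X) or on C_c(X), and let μ_ρ be the associated set function. Then for every compact K ⊆ X: μ_ρ(K) = inf{ρ(g) : g ∈ C_c(X), g ≥ 1_K} = inf{ρ(g) : g ∈ C_c(X), 0 ≤ g ≤ 1, g = 1 on K}. In particular, μ_ρ(K) < ∞ for every compact K. -/

import Mathlib

open Set Filter Topology MeasureTheory
open scoped ENNReal BoundedContinuousFunction

universe u

/-- A topological measure on `X`: a set function on subsets of `X` (only its values on open
and closed sets matter), not identically `∞` on open/closed sets, satisfying (TM1)–(TM3). -/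
structure TopMeasure (X : Type u) [TopologicalSpace X] where
  toFun : Set X → ℝ≥0∞
  not_all_top : ∃ A : Set X, (IsOpen A ∨ IsClosed A) ∧ toFun A ≠ ∞
  tm1 : ∀ A B : Set X, Disjoint A B → (IsOpen A ∨ IsCompact A) → (IsOpen B ∨ IsCompact B) →
      (IsOpen (A ∪ B) ∨ IsCompact (A ∪ B)) → toFun (A ∪ B) = toFun A + toFun B
  tm2 : ∀ U : Set X, IsOpen U → toFun U = ⨆ K ∈ {K : Set X | IsCompact K ∧ K ⊆ U}, toFun K
  tm3 : ∀ F : Set X, IsClosed F → toFun F = ⨅ U ∈ {U : Set X | IsOpen U ∧ F ⊆ U}, toFun U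

/-- `μ` is compact-finite. -/
def TopMeasure.CompactFinite {X : Type u} [TopologicalSpace X] (μ : TopMeasure X) : Prop :=
  ∀ K : Set X, IsCompact K → μ.toFun K ≠ ∞

/-- The set of compactly supported continuous functions, inside `C_b(X)`. -/
def CcS (X : Type u) [TopologicalSpace X] : Set (X →ᵇ ℝ) :=
  {f | HasCompactSupport (f : X → ℝ)}

/-- The set of continuous functions vanishing at infinity, inside `C_b(X)`. -/
def C0S (X : Type u) [TopologicalSpace X] : Set (X →ᵇ ℝ) :=
  {f | Tendsto (f : X → ℝ) (cocompact X) (nhds 0)}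

/-- `𝔅` is a (non-unital) subalgebra of `C_b(X)`. -/
def IsSubalgS {X : Type u} [TopologicalSpace X] (𝔅 : Set (X →ᵇ ℝ)) : Prop :=
  (∀ f g : X →ᵇ ℝ, f ∈ 𝔅 → g ∈ 𝔅 → f + g ∈ 𝔅) ∧
  (∀ f g : X →ᵇ ℝ, f ∈ 𝔅 → g ∈ 𝔅 → f * g ∈ 𝔅) ∧
  (∀ (c : ℝ) (f : X →ᵇ ℝ), f ∈ 𝔅 → c • f ∈ 𝔅)

/-- The singly generated subalgebra `B(h)`: the smallest closed (in `𝔅`) subalgebra of `𝔅`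
containing `h`. -/
def sgen {X : Type u} [TopologicalSpace X] (𝔅 : Set (X →ᵇ ℝ)) (h : X →ᵇ ℝ) :
    Set (X →ᵇ ℝ) :=
  ⋂₀ {S : Set (X →ᵇ ℝ) | S ⊆ 𝔅 ∧ h ∈ S ∧
      (∀ f g : X →ᵇ ℝ, f ∈ S → g ∈ S → f + g ∈ S) ∧
      (∀ f g : X →ᵇ ℝ, f ∈ S → g ∈ S → f * g ∈ S) ∧
      (∀ (c : ℝ) (f : X →ᵇ ℝ), f ∈ S → c • f ∈ S) ∧
      IsClosed {x : ↥𝔅 | (x : X →ᵇ ℝ) ∈ S}}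

/-- A signed quasi-linear functional on `𝔅` (QI1), (QI2). -/
structure SignedQLF {X : Type u} [TopologicalSpace X] (𝔅 : Set (X →ᵇ ℝ)) where
  toFun : (X →ᵇ ℝ) → ℝ
  smul_eq : ∀ (a : ℝ) (f : X →ᵇ ℝ), f ∈ 𝔅 → toFun (a • f) = a * toFun f
  add_eq : ∀ h ∈ 𝔅, ∀ f g : X →ᵇ ℝ, f ∈ sgen 𝔅 h → g ∈ sgen 𝔅 h →
      toFun (f + g) = toFun f + toFun g

/-- A (positive) quasi-linear functional on `𝔅` (QI1)–(QI3). -/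
structure QLF {X : Type u} [TopologicalSpace X] (𝔅 : Set (X →ᵇ ℝ)) extends SignedQLF 𝔅 where
  pos : ∀ f : X →ᵇ ℝ, f ∈ 𝔅 → 0 ≤ f → 0 ≤ toFun f

/-- `‖ρ‖ = sup {ρ(f) : f ∈ 𝔅, 0 ≤ f ≤ 1}`, as an extended real number. -/
noncomputable def qnorm {X : Type u} [TopologicalSpace X] {𝔅 : Set (X →ᵇ ℝ)} (ρ : QLF 𝔅) :
    ℝ≥0∞ :=
  ⨆ f ∈ {f : X →ᵇ ℝ | f ∈ 𝔅 ∧ 0 ≤ f ∧ f ≤ 1}, ENNReal.ofReal (ρ.toFun f)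

/-- `m` is the measure `m_f` on `ℝ` associated with a finite topological measure `μ` and
`f ∈ C₀(X)` (case (A)): `m(W) = μ(f⁻¹(W))` for every open `W ⊆ ℝ`. -/
def IsMfA {X : Type u} [TopologicalSpace X] (μ : TopMeasure X) (f : X →ᵇ ℝ)
    (m : Measure ℝ) : Prop :=
  ∀ W : Set ℝ, IsOpen W → m W = μ.toFun ((f : X → ℝ) ⁻¹' W)

/-- `m` is the measure `m_f` on `ℝ` associated with a compact-finite topological measure `μ`
and `f ∈ C_c(X)` (case (B)): `m(W) = μ(f⁻¹(W \ {0}))` for every open `W ⊆ ℝ`. -/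
def IsMfB {X : Type u} [TopologicalSpace X] (μ : TopMeasure X) (f : X →ᵇ ℝ)
    (m : Measure ℝ) : Prop :=
  ∀ W : Set ℝ, IsOpen W → m W = μ.toFun ((f : X → ℝ) ⁻¹' (W \ {0}))

/-- The support of a (Borel) measure on `ℝ`. -/
def msupp (m : Measure ℝ) : Set ℝ := {x : ℝ | ∀ U ∈ nhds x, 0 < m U}

/-- The set function `μ_ρ` on open sets:
`μ_ρ(U) = sup {ρ(f) : f ∈ C_c(X), 0 ≤ f ≤ 1, supp f ⊆ U}`. -/
noncomputable def muO {X : Type u} [TopologicalSpace X] {𝔅 : Set (X →ᵇ ℝ)} (ρ : QLF 𝔅)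
    (U : Set X) : ℝ≥0∞ :=
  ⨆ f ∈ {f : X →ᵇ ℝ | f ∈ CcS X ∧ 0 ≤ f ∧ f ≤ 1 ∧ tsupport (f : X → ℝ) ⊆ U},
    ENNReal.ofReal (ρ.toFun f)

/-- The set function `μ_ρ` on closed sets: `μ_ρ(F) = inf {μ_ρ(U) : U open, F ⊆ U}`. -/
noncomputable def muC {X : Type u} [TopologicalSpace X] {𝔅 : Set (X →ᵇ ℝ)} (ρ : QLF 𝔅)
    (F : Set X) : ℝ≥0∞ :=
  ⨅ U ∈ {U : Set X | IsOpen U ∧ F ⊆ U}, muO ρ U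

open Classical in
/-- The set function `μ_ρ`. -/
noncomputable def muR {X : Type u} [TopologicalSpace X] {𝔅 : Set (X →ᵇ ℝ)} (ρ : QLF 𝔅) :
    Set X → ℝ≥0∞ :=
  fun A => if IsOpen A then muO ρ A else muC ρ A

/-- `ρ = ρ_μ` on `C₀(X)` (case (A)): for every `f ∈ C₀(X)` and every measure `m_f`
associated with `μ` and `f`, `ρ(f) = ∫_ℝ id dm_f`. -/
def ReprA {X : Type u} [TopologicalSpace X] {𝔅 : Set (X →ᵇ ℝ)} (μ : TopMeasure X)
    (ρ : QLF 𝔅) : Prop :=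
  ∀ f ∈ C0S X, ∀ m : Measure ℝ, IsMfA μ f m → ρ.toFun f = ∫ t, t ∂m

/-- `ρ = ρ_μ` on `C_c(X)` (case (B)). -/
def ReprB {X : Type u} [TopologicalSpace X] {𝔅 : Set (X →ᵇ ℝ)} (μ : TopMeasure X)
    (ρ : QLF 𝔅) : Prop :=
  ∀ f ∈ CcS X, ∀ m : Measure ℝ, IsMfB μ f m → ρ.toFun f = ∫ t, t ∂m


section Aux
variable {X : Type u} [TopologicalSpace X]

lemma myCcS_subset_C0S : CcS X ⊆ C0S X := by
  intro f hf
  have hmem : {x : X | f x = 0} ∈ cocompact X :=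
    mem_cocompact.mpr ⟨tsupport ⇑f, hf, fun x hx => image_eq_zero_of_notMem_tsupport hx⟩
  have : (fun _ : X => (0:ℝ)) =ᶠ[cocompact X] ⇑f := by
    filter_upwards [hmem] with x hx using hx.symm
  exact Tendsto.congr' this tendsto_const_nhds

lemma memB {𝔅 : Set (X →ᵇ ℝ)} (h𝔅 : 𝔅 = C0S X ∨ 𝔅 = CcS X) {f : X →ᵇ ℝ}
    (hf : f ∈ CcS X) : f ∈ 𝔅 := by
  rcases h𝔅 with h | h <;> rw [h]
  · exact myCcS_subset_C0S hf
  · exact hf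

lemma B_mem_family {𝔅 : Set (X →ᵇ ℝ)} (h𝔅 : 𝔅 = C0S X ∨ 𝔅 = CcS X) {h : X →ᵇ ℝ}
    (hh : h ∈ 𝔅) :
    𝔅 ∈ {S : Set (X →ᵇ ℝ) | S ⊆ 𝔅 ∧ h ∈ S ∧
      (∀ f g : X →ᵇ ℝ, f ∈ S → g ∈ S → f + g ∈ S) ∧
      (∀ f g : X →ᵇ ℝ, f ∈ S → g ∈ S → f * g ∈ S) ∧
      (∀ (c : ℝ) (f : X →ᵇ ℝ), f ∈ S → c • f ∈ S) ∧
      IsClosed {x : ↥𝔅 | (x : X →ᵇ ℝ) ∈ S}} := by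
  have hclosed : IsClosed {x : ↥𝔅 | (x : X →ᵇ ℝ) ∈ 𝔅} := by
    have : {x : ↥𝔅 | (x : X →ᵇ ℝ) ∈ 𝔅} = Set.univ := eq_univ_of_forall fun x => x.2
    rw [this]; exact isClosed_univ
  rcases h𝔅 with hB | hB <;> subst hB
  · refine ⟨subset_rfl, hh, ?_, ?_, ?_, hclosed⟩
    · intro f g hf hg
      have := hf.add hg
      simpa [C0S, Pi.add_def] using this
    · intro f g hf hg
      have := hf.mul hg
      simpa [C0S, Pi.mul_def] using this
    · intro c f hf
      have := hf.const_mul c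
      simpa [C0S, BoundedContinuousFunction.coe_smul, smul_eq_mul] using this
  · refine ⟨subset_rfl, hh, ?_, ?_, ?_, hclosed⟩
    · intro f g hf hg
      have hf' : HasCompactSupport ⇑f := hf
      have hg' : HasCompactSupport ⇑g := hg
      have : HasCompactSupport (⇑f + ⇑g) := hf'.add hg'
      simpa [CcS, BoundedContinuousFunction.coe_add] using this
    · intro f g hf hg
      have hf' : HasCompactSupport ⇑f := hf
      have : HasCompactSupport (⇑f * ⇑g) := hf'.mul_right
      simpa [CcS, BoundedContinuousFunction.coe_mul] using this
    · intro c f hf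
      have h1 : HasCompactSupport ((fun t : ℝ => c * t) ∘ ⇑f) :=
        hf.comp_left (by simp)
      have h2 : ⇑(c • f) = (fun t : ℝ => c * t) ∘ ⇑f := by
        funext x; simp [BoundedContinuousFunction.coe_smul, smul_eq_mul, Function.comp]
      simpa [CcS, h2] using h1

lemma self_mem_sgen {𝔅 : Set (X →ᵇ ℝ)} (h : X →ᵇ ℝ) : h ∈ sgen 𝔅 h :=
  fun _ hS => hS.2.1

lemma sgen_subset {𝔅 : Set (X →ᵇ ℝ)} (h𝔅 : 𝔅 = C0S X ∨ 𝔅 = CcS X) {h : X →ᵇ ℝ}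
    (hh : h ∈ 𝔅) : sgen 𝔅 h ⊆ 𝔅 :=
  sInter_subset_of_mem (B_mem_family h𝔅 hh)

lemma sgen_add {𝔅 : Set (X →ᵇ ℝ)} {h f g : X →ᵇ ℝ} (hf : f ∈ sgen 𝔅 h)
    (hg : g ∈ sgen 𝔅 h) : f + g ∈ sgen 𝔅 h :=
  fun S hS => hS.2.2.1 f g (hf S hS) (hg S hS)

lemma sgen_smul {𝔅 : Set (X →ᵇ ℝ)} {h f : X →ᵇ ℝ} (c : ℝ) (hf : f ∈ sgen 𝔅 h) :
    c • f ∈ sgen 𝔅 h :=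
  fun S hS => hS.2.2.2.2.1 c f (hf S hS)

lemma bcf_le_iff {f g : X →ᵇ ℝ} : f ≤ g ↔ ∀ x, f x ≤ g x := Iff.rfl

lemma rho_mono {𝔅 : Set (X →ᵇ ℝ)} (h𝔅 : 𝔅 = C0S X ∨ 𝔅 = CcS X) (ρ : QLF 𝔅)
    {h f g : X →ᵇ ℝ} (hh : h ∈ 𝔅) (hf : f ∈ sgen 𝔅 h) (hg : g ∈ sgen 𝔅 h)
    (hle : f ≤ g) : ρ.toFun f ≤ ρ.toFun g := by
  have hd : g + (-1 : ℝ) • f ∈ sgen 𝔅 h := sgen_add hg (sgen_smul _ hf)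
  have h1 : ρ.toFun (f + (g + (-1 : ℝ) • f)) = ρ.toFun f + ρ.toFun (g + (-1 : ℝ) • f) :=
    ρ.add_eq h hh f _ hf hd
  have h2 : f + (g + (-1 : ℝ) • f) = g := by
    ext x
    simp [BoundedContinuousFunction.coe_add, BoundedContinuousFunction.coe_smul]
  have h3 : (0 : ℝ) ≤ ρ.toFun (g + (-1 : ℝ) • f) := by
    refine ρ.pos _ (sgen_subset h𝔅 hh hd) ?_
    intro x
    have h4 : f x ≤ g x := hle x
    show (0 : X →ᵇ ℝ) x ≤ (g + (-1 : ℝ) • f) x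
    simp only [BoundedContinuousFunction.coe_zero, Pi.zero_apply,
      BoundedContinuousFunction.coe_add, Pi.add_apply,
      BoundedContinuousFunction.coe_smul, Pi.smul_apply, smul_eq_mul]
    linarith
  rw [h2] at h1
  linarith

lemma poly_mem {S : Set (X →ᵇ ℝ)}
    (hmul : ∀ f g : X →ᵇ ℝ, f ∈ S → g ∈ S → f * g ∈ S)
    (hadd : ∀ f g : X →ᵇ ℝ, f ∈ S → g ∈ S → f + g ∈ S)
    (hsmul : ∀ (c : ℝ) (f : X →ᵇ ℝ), f ∈ S → c • f ∈ S)
    {w : X →ᵇ ℝ} (hw : w ∈ S) (p : Polynomial ℝ) :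
    ∃ F ∈ S, ∀ x, F x = w x * p.eval (w x) := by
  have hpow : ∀ n : ℕ, w ^ (n + 1) ∈ S := by
    intro n
    induction n with
    | zero => simpa using hw
    | succ k ih => rw [pow_succ]; exact hmul _ _ ih hw
  induction p using Polynomial.induction_on' with
  | add p q hp hq =>
    obtain ⟨Fp, hFp, hFpx⟩ := hp
    obtain ⟨Fq, hFq, hFqx⟩ := hq
    refine ⟨Fp + Fq, hadd _ _ hFp hFq, fun x => ?_⟩
    simp [hFpx x, hFqx x]
    ring
  | monomial n a =>
    refine ⟨a • w ^ (n + 1), hsmul _ _ (hpow n), fun x => ?_⟩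
    simp [BoundedContinuousFunction.coe_smul, BoundedContinuousFunction.coe_pow,
      Polynomial.eval_monomial, pow_succ]
    ring

lemma comp_mem_sgen {𝔅 : Set (X →ᵇ ℝ)} (h𝔅 : 𝔅 = C0S X ∨ 𝔅 = CcS X)
    {w : X →ᵇ ℝ} (hw : w ∈ CcS X) {φ : ℝ → ℝ} (hφ : Continuous φ) (hφ0 : φ 0 = 0)
    {F : X →ᵇ ℝ} (hF : F ∈ CcS X) (hFx : ∀ x, F x = φ (w x)) : F ∈ sgen 𝔅 w := by
  intro S hS
  obtain ⟨hSB, hwS, hadd, hmul, hsmul, hclosed⟩ := hS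
  have hF𝔅 : F ∈ 𝔅 := memB h𝔅 hF
  set M := ‖w‖ with hM
  have hM0 : (0 : ℝ) ≤ M := norm_nonneg w
  have hmem : ∀ x, w x ∈ Set.Icc (-M) M := by
    intro x
    have := w.norm_coe_le_norm x
    rw [Real.norm_eq_abs] at this
    exact abs_le.mp this
  have hcl : (⟨F, hF𝔅⟩ : ↥𝔅) ∈ closure {x : ↥𝔅 | (x : X →ᵇ ℝ) ∈ S} := by
    rw [Metric.mem_closure_iff]
    intro ε hε
    obtain ⟨q, hq⟩ := exists_polynomial_near_of_continuousOn (-M) M φ hφ.continuousOn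
      (ε / 4) (by linarith)
    set p := q - Polynomial.C (q.eval 0) with hp
    have hp0 : p.coeff 0 = 0 := by
      simp [hp, Polynomial.coeff_zero_eq_eval_zero]
    obtain ⟨r, hr⟩ := Polynomial.X_dvd_iff.mpr hp0
    obtain ⟨G, hGS, hGx⟩ := poly_mem hmul hadd hsmul hwS r
    refine ⟨⟨G, hSB hGS⟩, hGS, ?_⟩
    rw [Subtype.dist_eq]
    have hq0 : |q.eval 0| < ε / 4 := by
      have := hq 0 ⟨by linarith, hM0⟩
      simpa [hφ0] using this
    have hdle : dist F G ≤ ε / 2 := by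
      rw [BoundedContinuousFunction.dist_le (by linarith)]
      intro x
      have h1 := hq (w x) (hmem x)
      have hpe : p.eval (w x) = w x * r.eval (w x) := by
        rw [hr]; simp
      have hpeq : p.eval (w x) = q.eval (w x) - q.eval 0 := by simp [hp]
      rw [Real.dist_eq, hFx x, hGx x, ← hpe, hpeq]
      have habs : |φ (w x) - (q.eval (w x) - q.eval 0)| ≤
          |q.eval (w x) - φ (w x)| + |q.eval 0| := by
        have he : φ (w x) - (q.eval (w x) - q.eval 0) =
            -(q.eval (w x) - φ (w x)) + q.eval 0 := by ring
        rw [he]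
        exact (abs_add_le _ _).trans (by rw [abs_neg])
      linarith
    linarith [hdle]
  exact hclosed.closure_subset hcl

lemma rho_cross {𝔅 : Set (X →ᵇ ℝ)} (h𝔅 : 𝔅 = C0S X ∨ 𝔅 = CcS X) (ρ : QLF 𝔅)
    {f h : X →ᵇ ℝ} (hf : f ∈ CcS X) (hh : h ∈ CcS X)
    (hf0 : 0 ≤ f) (hf1 : f ≤ 1) (hh0 : 0 ≤ h) (hh1 : h ≤ 1) {V : Set X}
    (hsupp : tsupport ⇑f ⊆ V) (hhV : ∀ x ∈ V, h x = 1) :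
    ρ.toFun f ≤ ρ.toFun h := by
  set w := f + h with hwdef
  have hwc : w ∈ CcS X := by
    have hf' : HasCompactSupport ⇑f := hf
    have hh' : HasCompactSupport ⇑h := hh
    have : HasCompactSupport (⇑f + ⇑h) := hf'.add hh'
    simpa [CcS, hwdef, BoundedContinuousFunction.coe_add] using this
  have hwx : ∀ x, w x = f x + h x := fun x => rfl
  have hf0' : ∀ x, 0 ≤ f x := hf0
  have hf1' : ∀ x, f x ≤ 1 := hf1
  have hh0' : ∀ x, 0 ≤ h x := hh0
  have hh1' : ∀ x, h x ≤ 1 := hh1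
  have hfψ : ∀ x, f x = max (w x - 1) 0 := by
    intro x
    by_cases hx : x ∈ tsupport ⇑f
    · have hxV : x ∈ V := hsupp hx
      rw [hwx, hhV x hxV]
      have he : f x + 1 - 1 = f x := by ring
      rw [he]
      exact (max_eq_left (hf0' x)).symm
    · have hfx : f x = 0 := image_eq_zero_of_notMem_tsupport hx
      rw [hfx, hwx, hfx, zero_add]
      exact (max_eq_right (by linarith [hh1' x])).symm
  have hhφ : ∀ x, h x = min (w x) 1 := by
    intro x
    by_cases hxV : x ∈ V
    · rw [hwx, hhV x hxV]
      exact (min_eq_right (by linarith [hf0' x])).symm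
    · have hfx : f x = 0 := image_eq_zero_of_notMem_tsupport fun hx => hxV (hsupp hx)
      rw [hwx, hfx, zero_add]
      exact (min_eq_left (hh1' x)).symm
  have hfs : f ∈ sgen 𝔅 w :=
    comp_mem_sgen h𝔅 hwc (continuous_id.sub continuous_const |>.max continuous_const)
      (by norm_num) hf hfψ
  have hhs : h ∈ sgen 𝔅 w :=
    comp_mem_sgen h𝔅 hwc (continuous_id.min continuous_const) (by norm_num) hh hhφ
  have hfh : f ≤ h := by
    intro x
    show f x ≤ h x
    by_cases hxV : x ∈ V
    · rw [hhV x hxV]; exact hf1' x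
    · have hfx : f x = 0 := image_eq_zero_of_notMem_tsupport fun hx => hxV (hsupp hx)
      rw [hfx]; exact hh0' x
  exact rho_mono h𝔅 ρ (memB h𝔅 hwc) hfs hhs hfh

end Aux

lemma dist01 {a b : ℝ} (ha : a ∈ Set.Icc (0:ℝ) 1) (hb : b ∈ Set.Icc (0:ℝ) 1) :
    dist a b ≤ 1 := by
  rw [Real.dist_eq, abs_sub_le_iff]
  constructor <;> linarith [ha.1, ha.2, hb.1, hb.2]

/-- for a quasi-linear functional `ρ` on `C₀(X)` or on `C_c(X)` and compact
`K`, `μ_ρ(K) = inf {ρ(g) : g ∈ C_c(X), g ≥ 1_K} = inf {ρ(g) : g ∈ C_c(X), 0 ≤ g ≤ 1,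
g = 1 on K}`; in particular `μ_ρ(K) < ∞`. -/
theorem muRho_compact_eq_inf {X : Type u} [TopologicalSpace X]
    [LocallyCompactSpace X] [T2Space X] [ConnectedSpace X]
    (𝔅 : Set (X →ᵇ ℝ)) (h𝔅 : 𝔅 = C0S X ∨ 𝔅 = CcS X) (ρ : QLF 𝔅)
    (K : Set X) (hK : IsCompact K) :
    (muC ρ K = ⨅ g ∈ {g : X →ᵇ ℝ | g ∈ CcS X ∧
        K.indicator (fun _ => (1 : ℝ)) ≤ (g : X → ℝ)}, ENNReal.ofReal (ρ.toFun g)) ∧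
    (muC ρ K = ⨅ g ∈ {g : X →ᵇ ℝ | g ∈ CcS X ∧ 0 ≤ g ∧ g ≤ 1 ∧ ∀ x ∈ K, g x = 1},
        ENNReal.ofReal (ρ.toFun g)) ∧
    muC ρ K ≠ ∞ := by
  classical
  -- Urysohn-type lemma
  have urysohn : ∀ U : Set X, IsOpen U → K ⊆ U → ∃ f : X →ᵇ ℝ, f ∈ CcS X ∧ 0 ≤ f ∧
      f ≤ 1 ∧ (∀ x ∈ K, f x = 1) ∧ tsupport ⇑f ⊆ U := by
    intro U hU hKU
    obtain ⟨k, hkc, hKk, hkU⟩ := exists_compact_between hK hU hKU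
    have hd : Disjoint K (interior k)ᶜ := Set.disjoint_left.mpr fun x hx hx' => hx' (hKk hx)
    obtain ⟨f, hf1, hf0, hfc, hf01⟩ :=
      exists_continuous_one_zero_of_isCompact hK isOpen_interior.isClosed_compl hd
    refine ⟨⟨f, 1, fun x y => dist01 (hf01 x) (hf01 y)⟩, hfc, fun x => (hf01 x).1,
      fun x => (hf01 x).2, fun x hx => hf1 hx, ?_⟩
    have hsupp : Function.support ⇑f ⊆ interior k := by
      intro x hx
      by_contra hxk
      exact hx (hf0 hxk)
    calc tsupport ⇑f ⊆ closure (interior k) := closure_mono hsupp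
      _ ⊆ k := closure_minimal interior_subset hkc.isClosed
      _ ⊆ U := hkU
  -- main estimate
  have step_a : ∀ g : X →ᵇ ℝ, g ∈ CcS X → K.indicator (fun _ => (1:ℝ)) ≤ ⇑g →
      muC ρ K ≤ ENNReal.ofReal (ρ.toFun g) := by
    intro g hgc hgK
    have hg0' : ∀ x, 0 ≤ g x := fun x =>
      le_trans (Set.indicator_nonneg (fun _ _ => zero_le_one) x) (hgK x)
    have hg0 : (0 : X →ᵇ ℝ) ≤ g := fun x => hg0' x
    have hg1 : ∀ x ∈ K, 1 ≤ g x := by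
      intro x hx
      have := hgK x
      rwa [Set.indicator_of_mem hx] at this
    have hR0 : 0 ≤ ρ.toFun g := ρ.pos g (memB h𝔅 hgc) hg0
    set R := ρ.toFun g with hRdef
    refine ENNReal.le_of_forall_pos_le_add fun δ hδ _ => ?_
    have hδ0 : (0:ℝ) < ↑δ := hδ
    set ε : ℝ := min (1/2) (↑δ / (2*R + 2*↑δ + 1)) with hεdef
    have hε0 : 0 < ε := lt_min (by norm_num) (div_pos hδ0 (by positivity))
    have hεhalf : ε ≤ 1/2 := min_le_left _ _
    have hε2 : ε * (2*R + 2*↑δ + 1) ≤ ↑δ := by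
      calc ε * (2*R + 2*↑δ + 1) ≤ (↑δ / (2*R + 2*↑δ + 1)) * (2*R + 2*↑δ + 1) := by
            have := min_le_right (1/2 : ℝ) (↑δ / (2*R + 2*↑δ + 1))
            have hpos : (0:ℝ) < 2*R + 2*↑δ + 1 := by positivity
            exact mul_le_mul_of_nonneg_right this hpos.le
        _ = ↑δ := div_mul_cancel₀ _ (by positivity)
    have h1ε : (0:ℝ) < 1 - ε := by linarith
    set U := {x : X | 1 - ε < g x} with hUdef
    have hUopen : IsOpen U := isOpen_lt continuous_const g.continuous
    have hKU : K ⊆ U := fun x hx => lt_of_lt_of_le (by linarith) (hg1 x hx)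
    set φ : ℝ → ℝ := fun t => min ((1 - ε)⁻¹ * t) 1 with hφdef
    have hφcont : Continuous φ := (continuous_const.mul continuous_id).min continuous_const
    have hφ0 : φ 0 = 0 := by simp [hφdef]
    have hφmem : ∀ x, φ (g x) ∈ Set.Icc (0:ℝ) 1 := fun x =>
      ⟨le_min (mul_nonneg (inv_nonneg.2 h1ε.le) (hg0' x)) zero_le_one, min_le_right _ _⟩
    set h : X →ᵇ ℝ := ⟨⟨fun x => φ (g x), hφcont.comp g.continuous⟩, 1,
      fun x y => dist01 (hφmem x) (hφmem y)⟩ with hhdef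
    have hhx : ∀ x, h x = φ (g x) := fun _ => rfl
    have hhc : h ∈ CcS X := by
      have hgc' : HasCompactSupport ⇑g := hgc
      have h1 : HasCompactSupport (φ ∘ ⇑g) := hgc'.comp_left hφ0
      have hcoe : ⇑h = φ ∘ ⇑g := rfl
      show HasCompactSupport ⇑h
      rw [hcoe]; exact h1
    have hh0 : (0 : X →ᵇ ℝ) ≤ h := fun x => (hφmem x).1
    have hh1 : h ≤ 1 := fun x => (hφmem x).2
    have hhV : ∀ x ∈ U, h x = 1 := by
      intro x hx
      have hgx : 1 - ε ≤ g x := le_of_lt hx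
      have : (1:ℝ) ≤ (1 - ε)⁻¹ * g x := by
        calc (1:ℝ) = (1 - ε)⁻¹ * (1 - ε) := (inv_mul_cancel₀ h1ε.ne').symm
          _ ≤ (1 - ε)⁻¹ * g x := mul_le_mul_of_nonneg_left hgx (inv_nonneg.2 h1ε.le)
      exact min_eq_right this
    have hhsgen : h ∈ sgen 𝔅 g := comp_mem_sgen h𝔅 hgc hφcont hφ0 hhc (fun x => rfl)
    have hsmulsgen : (1 - ε)⁻¹ • g ∈ sgen 𝔅 g := sgen_smul _ (self_mem_sgen g)
    have hle2 : h ≤ (1 - ε)⁻¹ • g := by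
      intro x
      show h x ≤ ((1 - ε)⁻¹ • g) x
      have : ((1 - ε)⁻¹ • g) x = (1 - ε)⁻¹ * g x := rfl
      rw [this]
      exact min_le_left _ _
    have hρh : ρ.toFun h ≤ ρ.toFun ((1 - ε)⁻¹ • g) :=
      rho_mono h𝔅 ρ (memB h𝔅 hgc) hhsgen hsmulsgen hle2
    have hsm : ρ.toFun ((1 - ε)⁻¹ • g) = (1 - ε)⁻¹ * R := ρ.smul_eq _ g (memB h𝔅 hgc)
    have hmuU : muO ρ U ≤ ENNReal.ofReal ((1 - ε)⁻¹ * R) := by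
      rw [muO]
      refine iSup₂_le fun f hf => ?_
      obtain ⟨hfc, hf0, hf1, hfsupp⟩ := hf
      have hρfh : ρ.toFun f ≤ ρ.toFun h :=
        rho_cross h𝔅 ρ hfc hhc hf0 hf1 hh0 hh1 hfsupp hhV
      exact ENNReal.ofReal_le_ofReal (by linarith)
    have h5 : muC ρ K ≤ muO ρ U := by
      rw [muC]
      exact iInf₂_le U ⟨hUopen, hKU⟩
    have harith : (1 - ε)⁻¹ * R ≤ R + ↑δ := by
      rw [← div_eq_inv_mul, div_le_iff₀ h1ε]
      nlinarith [mul_nonneg hε0.le (add_nonneg hR0 hδ0.le), hε2, hε0.le]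
    calc muC ρ K ≤ muO ρ U := h5
      _ ≤ ENNReal.ofReal ((1 - ε)⁻¹ * R) := hmuU
      _ ≤ ENNReal.ofReal (R + ↑δ) := ENNReal.ofReal_le_ofReal harith
      _ = ENNReal.ofReal R + ENNReal.ofReal ↑δ := ENNReal.ofReal_add hR0 δ.coe_nonneg
      _ = ENNReal.ofReal R + ↑δ := by rw [ENNReal.ofReal_coe_nnreal]
  -- assembly
  have hI12 : (⨅ g ∈ {g : X →ᵇ ℝ | g ∈ CcS X ∧
        K.indicator (fun _ => (1 : ℝ)) ≤ (g : X → ℝ)}, ENNReal.ofReal (ρ.toFun g)) ≤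
      ⨅ g ∈ {g : X →ᵇ ℝ | g ∈ CcS X ∧ 0 ≤ g ∧ g ≤ 1 ∧ ∀ x ∈ K, g x = 1},
        ENNReal.ofReal (ρ.toFun g) := by
    refine le_iInf₂ fun g hg => ?_
    refine iInf₂_le g ⟨hg.1, fun x => ?_⟩
    by_cases hx : x ∈ K
    · rw [Set.indicator_of_mem hx]
      exact (hg.2.2.2 x hx).ge
    · rw [Set.indicator_of_notMem hx]
      exact hg.2.1 x
  have hb : (⨅ g ∈ {g : X →ᵇ ℝ | g ∈ CcS X ∧ 0 ≤ g ∧ g ≤ 1 ∧ ∀ x ∈ K, g x = 1},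
      ENNReal.ofReal (ρ.toFun g)) ≤ muC ρ K := by
    rw [muC]
    refine le_iInf₂ fun U hU => ?_
    obtain ⟨f, hfc, hf0, hf1, hfK, hfsupp⟩ := urysohn U hU.1 hU.2
    refine le_trans (iInf₂_le f ⟨hfc, hf0, hf1, hfK⟩) ?_
    rw [muO]
    exact le_iSup₂ (f := fun (f : X →ᵇ ℝ) (_ : f ∈ {f : X →ᵇ ℝ | f ∈ CcS X ∧ 0 ≤ f ∧
      f ≤ 1 ∧ tsupport (f : X → ℝ) ⊆ U}) => ENNReal.ofReal (ρ.toFun f)) f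
      ⟨hfc, hf0, hf1, hfsupp⟩
  have ha : muC ρ K ≤ ⨅ g ∈ {g : X →ᵇ ℝ | g ∈ CcS X ∧
      K.indicator (fun _ => (1 : ℝ)) ≤ (g : X → ℝ)}, ENNReal.ofReal (ρ.toFun g) :=
    le_iInf₂ fun g hg => step_a g hg.1 hg.2
  have hfin : muC ρ K ≠ ∞ := by
    obtain ⟨f₀, hf₀c, hf₀0, hf₀1, hf₀K, _⟩ := urysohn univ isOpen_univ (subset_univ K)
    have hle : muC ρ K ≤ ENNReal.ofReal (ρ.toFun f₀) :=
      le_trans (ha.trans hI12) (iInf₂_le f₀ ⟨hf₀c, hf₀0, hf₀1, hf₀K⟩)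
    exact ne_top_of_le_ne_top ENNReal.ofReal_ne_top hle
  exact ⟨le_antisymm ha (hI12.trans hb), le_antisymm (ha.trans hI12) hb, hfin⟩
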